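/- Let X be a compact hyper-Kähler manifold of complex dimension 2m and let G be a group acting on the rational cohomology ring H*(X, ℚ) by graded algebra automorphisms. If G acts trivially on H²(X, ℚ), then the G-action commutes with the action of the Looijenga–Lunts–Verbitsky Lie algebra g_LLV(X) ⊆ gl(H*(X, ℚ)). -/

import Mathlib

/-!
Statement 12: Let X be a compact hyper-Kähler manifold of complex dimension 2m, and let G
act on the rational cohomology ring H*(X, ℚ) by graded algebra automorphisms.  If G acts
trivially on H²(X, ℚ), then the G-action commutes with the action of the
Looijenga–Lunts–Verbitsky Lie algebra g_LLV(X) ⊆ gl(H*(X, ℚ)).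

We model the cohomology H*(X, ℚ) of the compact hyper-Kähler manifold X as a ℚ-algebra `V`
(the cup product ring) with a grading `gr : ℕ → Submodule ℚ V` (so `gr k = H^k(X, ℚ)`),
together with the degree operator `θ` acting on `H^k` as multiplication by `k − 2m`.
A class `x ∈ H²` has the Lefschetz property iff `(L_x, θ, Λ_x)` is an `sl₂`-triple for a
(necessarily unique) `Λ_x`, where `L_x` is cup product with `x`; the LLV Lie algebra is the
Lie subalgebra of `gl(H*(X, ℚ))` generated by all such triples.
-/

universe u

open Module

attribute [local instance 100] LieRing.ofAssociativeRing

lemma eigen_zero_aux {V : Type u} [Ring V] [Algebra ℚ V]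
    (m : ℕ) (gr : ℕ → Submodule ℚ V) (hgr_top : ⨆ k, gr k = ⊤)
    (θ : Module.End ℚ V) (hθ : ∀ (k : ℕ), ∀ v ∈ gr k, θ v = ((k : ℚ) - 2 * m) • v)
    (μ : ℚ) (hμ : ∀ j : ℕ, μ ≠ (j : ℚ) - 2 * m)
    {w : V} (hw : θ w = μ • w) : w = 0 := by
  have hindep := Module.End.eigenspaces_iSupIndep θ
  have hd := hindep μ
  have hle : (⊤ : Submodule ℚ V) ≤ ⨆ ν, ⨆ _ : ν ≠ μ, θ.eigenspace ν := by
    rw [← hgr_top]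
    refine iSup_le fun k => ?_
    have h1 : gr k ≤ θ.eigenspace ((k : ℚ) - 2 * m) := fun v hv =>
      Module.End.mem_eigenspace_iff.mpr (hθ k v hv)
    exact h1.trans (le_iSup₂ (f := fun ν (_ : ν ≠ μ) => θ.eigenspace ν)
      ((k : ℚ) - 2 * m) (Ne.symm (hμ k)))
  have hw1 : w ∈ θ.eigenspace μ := Module.End.mem_eigenspace_iff.mpr hw
  exact Submodule.disjoint_def.mp hd w hw1 (hle Submodule.mem_top)

lemma weight_shift_zero_aux {V : Type u} [Ring V] [Algebra ℚ V]
    (m : ℕ) (gr : ℕ → Submodule ℚ V) (hgr_top : ⨆ k, gr k = ⊤)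
    (hgr_bounded : ∀ k : ℕ, 4 * m < k → gr k = ⊥)
    (θ : Module.End ℚ V) (hθ : ∀ (k : ℕ), ∀ v ∈ gr k, θ v = ((k : ℚ) - 2 * m) • v)
    (c : ℚ) (hc : c + 4 * m < 0)
    (φ : Module.End ℚ V) (hφ : ∀ v, θ (φ v) = φ (θ v) + c • φ v) : φ = 0 := by
  ext v
  have hv : v ∈ ⨆ k, gr k := hgr_top ▸ Submodule.mem_top
  simp only [LinearMap.zero_apply]
  induction hv using Submodule.iSup_induction' with
  | mem k v hvk =>
    rcases le_or_gt k (4 * m) with hk | hk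
    · have heig : θ (φ v) = (((k : ℚ) - 2 * m) + c) • φ v := by
        rw [hφ v, hθ k v hvk, map_smul, add_smul]
      refine eigen_zero_aux m gr hgr_top θ hθ (((k : ℚ) - 2 * m) + c) ?_ heig
      intro j hj
      have hk' : (k : ℚ) ≤ 4 * m := by exact_mod_cast hk
      have hj' : (0 : ℚ) ≤ j := by positivity
      linarith
    · have : v = 0 := by
        have := hgr_bounded k hk
        rw [this] at hvk
        simpa using hvk
      simp [this]
  | zero => simp
  | add x y _ _ hx hy => simp [map_add, hx, hy]

lemma lambda_unique_aux {V : Type u} [Ring V] [Algebra ℚ V]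
    (m : ℕ) (gr : ℕ → Submodule ℚ V) (hgr_top : ⨆ k, gr k = ⊤)
    (hgr_bounded : ∀ k : ℕ, 4 * m < k → gr k = ⊥)
    (θ : Module.End ℚ V) (hθ : ∀ (k : ℕ), ∀ v ∈ gr k, θ v = ((k : ℚ) - 2 * m) • v)
    (e Λ : Module.End ℚ V) (t : IsSl2Triple θ e Λ)
    (d : Module.End ℚ V)
    (hdθ : ⁅θ, d⁆ = (-2 : ℚ) • d) (hde : ⁅e, d⁆ = 0) : d = 0 := by
  by_contra hd
  have P : t.HasPrimitiveVectorWith d (-2 : ℚ) := ⟨hd, hdθ, hde⟩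
  set Ψ : ℕ → Module.End ℚ V :=
    fun n => ((LieModule.toEnd ℚ (Module.End ℚ V) (Module.End ℚ V) Λ) ^ n) d with hΨ
  have hzero : Ψ (2 * m) = 0 := by
    have hw := P.lie_h_pow_toEnd_f (2 * m)
    refine weight_shift_zero_aux m gr hgr_top hgr_bounded θ hθ
      (-2 - 2 * (2 * m)) (by linarith) _ (fun v => ?_)
    have hw' : θ * Ψ (2 * m) - Ψ (2 * m) * θ = ((-2 : ℚ) - 2 * (2 * m)) • Ψ (2 * m) := by
      simpa [Ring.lie_def] using hw
    have := congrFun (congrArg (fun (f : Module.End ℚ V) => (f : V → V)) hw') v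
    simp only [LinearMap.sub_apply, Module.End.mul_apply, LinearMap.smul_apply] at this
    linear_combination (norm := module) this
  obtain ⟨n, hn₁, hn₂⟩ :=
    Nat.exists_not_and_succ_of_not_zero_of_exists (p := fun n => Ψ n = 0)
      (by simpa [hΨ] using P.ne_zero) ⟨2 * m, hzero⟩
  have hs := P.lie_e_pow_succ_toEnd_f n
  rw [show ((LieModule.toEnd ℚ (Module.End ℚ V) (Module.End ℚ V) Λ) ^ (n+1)) d = Ψ (n+1) from rfl,
    hn₂, lie_zero, eq_comm, smul_eq_zero] at hs
  rcases hs with hs | hs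
  · have h1 : ((n : ℚ) + 1) * (-2 - n) ≠ 0 := by
      have : (0:ℚ) ≤ (n:ℚ) := by positivity
      intro h; rcases mul_eq_zero.mp h with h | h <;> linarith [h]
    exact h1 (by linarith [hs])
  · exact hn₁ hs


/-- Let `V = H*(X, ℚ)` be the cohomology algebra of a compact
hyper-Kähler manifold `X` of complex dimension `2m`, with grading `gr k = H^k(X, ℚ)` and
degree operator `θ` acting on `H^k` by `k − 2m`.  Let `G` act on `V` by algebra
automorphisms preserving the grading and acting trivially on `H² = gr 2`.  Then the action
of `G` commutes with every element of the Looijenga–Lunts–Verbitsky Lie algebra, i.e. with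
every element of the Lie subalgebra of `End_ℚ(V)` generated by the `sl₂`-triples
`(L_x, θ, Λ_x)` attached to classes `x ∈ H²(X, ℚ)` with the Lefschetz property. -/
theorem group_action_commutes_with_LLV_lieAlgebra
    (V : Type u) [Ring V] [Algebra ℚ V]
    (m : ℕ) (gr : ℕ → Submodule ℚ V)
    -- `V` is the graded algebra `H*(X, ℚ)` of a `2m`-dimensional compact hyper-Kähler `X`:
    (hgr_top : ⨆ k, gr k = ⊤)
    (hgr_mul : ∀ j k : ℕ, ∀ a ∈ gr j, ∀ b ∈ gr k, a * b ∈ gr (j + k))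
    (hgr_bounded : ∀ k : ℕ, 4 * m < k → gr k = ⊥)
    -- the degree operator `θ`:
    (θ : Module.End ℚ V)
    (hθ : ∀ (k : ℕ), ∀ v ∈ gr k, θ v = ((k : ℚ) - 2 * m) • v)
    -- the group action by graded algebra automorphisms:
    (G : Type u) [Group G] (ρ : G →* (V ≃ₐ[ℚ] V))
    (hgraded : ∀ (g : G) (k : ℕ), ∀ v ∈ gr k, ρ g v ∈ gr k)
    -- the action is trivial on `H²(X, ℚ)`:
    (htriv : ∀ (g : G), ∀ v ∈ gr 2, ρ g v = v) :
    ∀ (g : G),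
      ∀ φ ∈ LieSubalgebra.lieSpan ℚ (Module.End ℚ V)
        {f : Module.End ℚ V |
          ∃ x ∈ gr 2, ∃ Λ : Module.End ℚ V,
            IsSl2Triple θ (LinearMap.mulLeft ℚ x) Λ ∧
              (f = LinearMap.mulLeft ℚ x ∨ f = θ ∨ f = Λ)},
      ∀ v : V, ρ g (φ v) = φ (ρ g v) := by
  -- θ commutes with every ρ g
  have commθ : ∀ (g : G) (v : V), ρ g (θ v) = θ (ρ g v) := by
    intro g v
    have hv : v ∈ ⨆ k, gr k := hgr_top ▸ Submodule.mem_top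
    induction hv using Submodule.iSup_induction' with
    | mem k v hvk =>
      rw [hθ k v hvk, map_smul, hθ k (ρ g v) (hgraded g k v hvk)]
    | zero => simp
    | add x y _ _ hx hy => simp [map_add, hx, hy]
  -- L_x commutes with every ρ g, for x ∈ gr 2
  have commL : ∀ (g : G), ∀ x ∈ gr 2, ∀ v : V, ρ g (x * v) = x * ρ g v := by
    intro g x hx v
    rw [map_mul, htriv g x hx]
  intro g
  -- the centralizer of ρ g as a Lie subalgebra
  set S : LieSubalgebra ℚ (Module.End ℚ V) :=
    { carrier := {φ : Module.End ℚ V | ∀ v, ρ g (φ v) = φ (ρ g v)}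
      add_mem' := fun {a b} ha hb v => by
        simp only [LinearMap.add_apply, map_add, ha v, hb v]
      zero_mem' := fun v => by simp
      smul_mem' := fun c a ha v => by
        simp only [LinearMap.smul_apply, map_smul, ha v]
      lie_mem' := fun {a b} ha hb v => by
        simp only [Ring.lie_def, LinearMap.sub_apply, Module.End.mul_apply, map_sub]
        rw [ha (b v), hb v, hb (a v), ha v] } with hS
  suffices h : LieSubalgebra.lieSpan ℚ (Module.End ℚ V)
        {f : Module.End ℚ V |
          ∃ x ∈ gr 2, ∃ Λ : Module.End ℚ V,
            IsSl2Triple θ (LinearMap.mulLeft ℚ x) Λ ∧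
              (f = LinearMap.mulLeft ℚ x ∨ f = θ ∨ f = Λ)} ≤ S by
    intro φ hφ v
    exact h hφ v
  rw [LieSubalgebra.lieSpan_le]
  rintro f ⟨x, hx2, Λ, t, hf⟩
  set e : Module.End ℚ V := LinearMap.mulLeft ℚ x with he
  -- membership in S for the three generators
  have hmemL : ∀ v : V, ρ g (e v) = e (ρ g v) := fun v => commL g x hx2 v
  have hmemθ : ∀ v : V, ρ g (θ v) = θ (ρ g v) := commθ g
  have hmemΛ : ∀ v : V, ρ g (Λ v) = Λ (ρ g v) := by
    set ψ : Module.End ℚ V := (ρ g).toLinearMap with hψ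
    set τ : Module.End ℚ V := (ρ g⁻¹).toLinearMap with hτ
    have hGinv : ∀ v : V, ρ g⁻¹ (ρ g v) = v := by
      intro v
      rw [← AlgEquiv.mul_apply, ← map_mul, inv_mul_cancel, map_one, AlgEquiv.one_apply]
    have hGinv' : ∀ v : V, ρ g (ρ g⁻¹ v) = v := by
      intro v
      rw [← AlgEquiv.mul_apply, ← map_mul, mul_inv_cancel, map_one, AlgEquiv.one_apply]
    have hτψ : τ * ψ = 1 := LinearMap.ext fun v => hGinv v
    have hψτ : ψ * τ = 1 := LinearMap.ext fun v => hGinv' v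
    have heψ : ψ * e = e * ψ := LinearMap.ext fun v => hmemL v
    have hθψ : ψ * θ = θ * ψ := LinearMap.ext fun v => hmemθ v
    have heτ : e * τ = τ * e := by
      calc e * τ = (τ * ψ) * (e * τ) := by rw [hτψ, one_mul]
        _ = τ * ((ψ * e) * τ) := by simp only [mul_assoc]
        _ = τ * ((e * ψ) * τ) := by rw [heψ]
        _ = (τ * e) * (ψ * τ) := by simp only [mul_assoc]
        _ = τ * e := by rw [hψτ, mul_one]
    have hθτ : θ * τ = τ * θ := by
      calc θ * τ = (τ * ψ) * (θ * τ) := by rw [hτψ, one_mul]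
        _ = τ * ((ψ * θ) * τ) := by simp only [mul_assoc]
        _ = τ * ((θ * ψ) * τ) := by rw [hθψ]
        _ = (τ * θ) * (ψ * τ) := by simp only [mul_assoc]
        _ = τ * θ := by rw [hψτ, mul_one]
    set Λ' : Module.End ℚ V := τ * Λ * ψ with hΛ'
    have teΛ : e * Λ - Λ * e = θ := by
      have := t.lie_e_f; rwa [Ring.lie_def] at this
    have tθΛ : θ * Λ - Λ * θ = -(2 • Λ) := by
      have := t.lie_h_f_nsmul; rwa [Ring.lie_def] at this
    have t' : IsSl2Triple θ e Λ' := by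
      refine ⟨t.h_ne_zero, ?_, t.lie_h_e_nsmul, ?_⟩
      · rw [Ring.lie_def, hΛ']
        calc e * (τ * Λ * ψ) - τ * Λ * ψ * e
            = (e * τ) * Λ * ψ - τ * Λ * (ψ * e) := by simp only [mul_assoc]
          _ = (τ * e) * Λ * ψ - τ * Λ * (e * ψ) := by rw [heτ, heψ]
          _ = τ * (e * Λ - Λ * e) * ψ := by
              simp only [mul_sub, sub_mul, mul_assoc]
          _ = τ * θ * ψ := by rw [teΛ]
          _ = θ * (τ * ψ) := by rw [← hθτ]; simp only [mul_assoc]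
          _ = θ := by rw [hτψ, mul_one]
      · rw [Ring.lie_def, hΛ']
        calc θ * (τ * Λ * ψ) - τ * Λ * ψ * θ
            = (θ * τ) * Λ * ψ - τ * Λ * (ψ * θ) := by simp only [mul_assoc]
          _ = (τ * θ) * Λ * ψ - τ * Λ * (θ * ψ) := by rw [hθτ, hθψ]
          _ = τ * (θ * Λ - Λ * θ) * ψ := by
              simp only [mul_sub, sub_mul, mul_assoc]
          _ = τ * (-(2 • Λ)) * ψ := by rw [tθΛ]
          _ = -(2 • (τ * Λ * ψ)) := by
              simp only [mul_neg, neg_mul, smul_mul_assoc, mul_smul_comm]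
    -- uniqueness of Λ
    have hd0 : Λ' - Λ = 0 := by
      refine lambda_unique_aux m gr hgr_top hgr_bounded θ hθ e Λ t (Λ' - Λ) ?_ ?_
      · rw [lie_sub, t'.lie_h_f_nsmul, t.lie_h_f_nsmul]
        have : ((-2 : ℚ)) • (Λ' - Λ) = -(2 • Λ') - -(2 • Λ) := by
          simp only [smul_sub]; module
        rw [this]
      · rw [lie_sub, t'.lie_e_f, t.lie_e_f, sub_self]
    have hΛeq : Λ' = Λ := by rwa [sub_eq_zero] at hd0
    have hcomm : ψ * Λ = Λ * ψ := by
      have h1 : ψ * (τ * Λ * ψ) = ψ * Λ := by rw [hΛ'] at hΛeq; rw [hΛeq]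
      calc ψ * Λ = ψ * (τ * Λ * ψ) := h1.symm
        _ = (ψ * τ) * Λ * ψ := by simp only [mul_assoc]
        _ = Λ * ψ := by rw [hψτ, one_mul]
    intro v
    have := congrFun (congrArg (fun (f : Module.End ℚ V) => (f : V → V)) hcomm) v
    simpa [Module.End.mul_apply, hψ] using this
  rcases hf with rfl | rfl | rfl
  · exact hmemL
  · exact hmemθ
  · exact hmemΛ
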